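/- arXiv:2411.04988 — 2 statements merged into one kernel-verified Lean document; each statement's English description precedes it below -/
import Mathlib

section
/- Let G = (V,E) be a connected locally finite graph. For every x ∈ V, every integer n ≥ 0, and every real t > 1, E_x[ G_t(X_0,X_n) / P^n(X_0,X_n) ] ≤ t + 1, where the expectation is over the lazy random walk started at x (note P^n(X_0,X_n) > 0 almost surely since the walk is lazy). -/
open scoped Classical BigOperators

namespace LazyRW

variable {V : Type*}

/-- One-step transition kernel of the lazy simple random walk. -/
noncomputable def step (G : SimpleGraph V) [G.LocallyFinite] (x y : V) : ℝ :=
  if x = y then 1/2 else if G.Adj x y then 1 / (2 * (G.degree x)) else 0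

/-- Probability of a given path of length `n` for the lazy walk started at `x`. -/
noncomputable def pathProb (G : SimpleGraph V) [G.LocallyFinite]
    (n : ℕ) (x : V) (p : Fin (n+1) → V) : ℝ :=
  (if p 0 = x then 1 else 0) * ∏ i : Fin n, step G (p i.castSucc) (p i.succ)

/-- Probability of an event determined by the first `n` steps of the lazy walk started at `x`. -/
noncomputable def walkProb (G : SimpleGraph V) [G.LocallyFinite]
    (n : ℕ) (x : V) (E : Set (Fin (n+1) → V)) : ℝ :=
  ∑' p : (Fin (n+1) → V), pathProb G n x p * E.indicator (fun _ => (1:ℝ)) p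

/-- Expectation of a functional of the first `n` steps of the lazy walk started at `x`. -/
noncomputable def walkExp (G : SimpleGraph V) [G.LocallyFinite]
    (n : ℕ) (x : V) (f : (Fin (n+1) → V) → ℝ) : ℝ :=
  ∑' p : (Fin (n+1) → V), pathProb G n x p * f p

/-- `n`-th power of the lazy transition matrix. -/
noncomputable def Pmat (G : SimpleGraph V) [G.LocallyFinite] : ℕ → V → V → ℝ
  | 0, x, y => if x = y then 1 else 0
  | (n+1), x, y => ∑' z, Pmat G n x z * step G z y

/-- Total variation profile `TV_n`. -/
noncomputable def TV (G : SimpleGraph V) [G.LocallyFinite] (n : ℕ) : ℝ :=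
  ⨆ e : {p : V × V // G.Adj p.1 p.2},
    (1/2) * ∑' z, |Pmat G n e.val.1 z - Pmat G n e.val.2 z|

/-- Expected graph-distance displacement at time `m`. -/
noncomputable def expDist (G : SimpleGraph V) [G.LocallyFinite] (m : ℕ) (x : V) : ℝ :=
  walkExp G m x (fun p => (G.dist (p 0) (p (Fin.last m)) : ℝ))

/-- `D_n^*`: supremal expected displacement up to time `n`. -/
noncomputable def Dstar (G : SimpleGraph V) [G.LocallyFinite] (n : ℕ) : ℝ :=
  ⨆ x : V, ⨆ m : Fin (n+1), expDist G m.1 x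

/-- Entropy of the walk at time `m` started at `x`. -/
noncomputable def entropy (G : SimpleGraph V) [G.LocallyFinite] (m : ℕ) (x : V) : ℝ :=
  ∑' y : V, Real.negMulLog (Pmat G m x y)

/-- `H_n^*`: supremal entropy up to time `n`. -/
noncomputable def Hstar (G : SimpleGraph V) [G.LocallyFinite] (n : ℕ) : ℝ :=
  ⨆ x : V, ⨆ m : Fin (n+1), entropy G m.1 x

/-- `|∂W|`: the number of edges with exactly one endpoint in `W`. -/
noncomputable def boundaryCard (G : SimpleGraph V) [G.LocallyFinite] (W : Finset V) : ℕ :=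
  ∑ w ∈ W, ((G.neighborFinset w).filter (fun z => z ∉ W)).card

/-- `deg(W)`: the sum of degrees of vertices in `W`. -/
noncomputable def degSum (G : SimpleGraph V) [G.LocallyFinite] (W : Finset V) : ℕ :=
  ∑ w ∈ W, G.degree w

/-- The isoperimetric profile `Φ(n)`. -/
noncomputable def isoProfile (G : SimpleGraph V) [G.LocallyFinite] (n : ℕ) : ℝ :=
  ⨅ W : {W : Finset V // W.Nonempty ∧ degSum G W ≤ n},
    (boundaryCard G W.1 : ℝ) / (degSum G W.1 : ℝ)

/-- `q_m(u,v)`: probability that the lazy walk started at `u` first visits `v` at time `m`. -/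
noncomputable def firstHit (G : SimpleGraph V) [G.LocallyFinite] (m : ℕ) (u v : V) : ℝ :=
  walkProb G m u {p | p (Fin.last m) = v ∧ ∀ i : Fin (m+1), i ≠ Fin.last m → p i ≠ v}

/-- The massive Green function `G_t(u,v)`. -/
noncomputable def greenT (G : SimpleGraph V) [G.LocallyFinite] (t : ℝ) (u v : V) : ℝ :=
  ∑' m : ℕ, (t/(t+1))^m * firstHit G m u v


/-! ### Auxiliary lemmas -/

section Aux

variable (G : SimpleGraph V) [G.LocallyFinite]

lemma step_nonneg (x y : V) : 0 ≤ step G x y := by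
  unfold step
  split_ifs with h1 h2
  · norm_num
  · positivity
  · exact le_refl 0

lemma step_row_sum_le (z : V) (T : Finset V) : ∑ v ∈ T, step G z v ≤ 1 := by
  classical
  set S0 : Finset V := insert z (G.neighborFinset z) with hS0
  have hzero : ∀ v ∈ T, v ∉ T ∩ S0 → step G z v = 0 := by
    intro v hv hnv
    have hvS0 : v ∉ S0 := fun h => hnv (Finset.mem_inter.2 ⟨hv, h⟩)
    have h1 : z ≠ v := fun h => hvS0 (by rw [hS0, ← h]; exact Finset.mem_insert_self _ _)
    have h2 : ¬ G.Adj z v := fun h =>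
      hvS0 (by rw [hS0]; exact Finset.mem_insert_of_mem ((G.mem_neighborFinset z v).2 h))
    unfold step
    rw [if_neg h1, if_neg h2]
  have heq : ∑ v ∈ T, step G z v = ∑ v ∈ T ∩ S0, step G z v :=
    (Finset.sum_subset Finset.inter_subset_left hzero).symm
  rw [heq]
  have hsub : ∑ v ∈ T ∩ S0, step G z v ≤ ∑ v ∈ S0, step G z v :=
    Finset.sum_le_sum_of_subset_of_nonneg Finset.inter_subset_right
      (fun v _ _ => step_nonneg G z v)
  refine hsub.trans ?_
  have hznm : z ∉ G.neighborFinset z := by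
    rw [G.mem_neighborFinset]; exact G.irrefl
  rw [hS0, Finset.sum_insert hznm]
  have hstep_self : step G z z = 1/2 := by unfold step; rw [if_pos rfl]
  have hnb : ∀ v ∈ G.neighborFinset z, step G z v = 1 / (2 * (G.degree z : ℝ)) := by
    intro v hv
    have hadj : G.Adj z v := (G.mem_neighborFinset z v).1 hv
    have hne : z ≠ v := G.ne_of_adj hadj
    unfold step
    rw [if_neg hne, if_pos hadj]
  rw [hstep_self, Finset.sum_congr rfl hnb, Finset.sum_const]
  have hcard : (G.neighborFinset z).card = G.degree z := rfl
  rw [hcard, nsmul_eq_mul]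
  rcases Nat.eq_zero_or_pos (G.degree z) with hd | hd
  · rw [hd]; norm_num
  · have hdpos : (0:ℝ) < (G.degree z : ℝ) := by exact_mod_cast hd
    have hh : (G.degree z : ℝ) * (1 / (2 * (G.degree z : ℝ))) = 1/2 := by
      field_simp
    rw [hh]; norm_num

lemma pathProb_nonneg (n : ℕ) (x : V) (p : Fin (n+1) → V) : 0 ≤ pathProb G n x p := by
  unfold pathProb
  apply mul_nonneg
  · split_ifs <;> norm_num
  · exact Finset.prod_nonneg fun i _ => step_nonneg G _ _

lemma pathProb_succ (n : ℕ) (x : V) (p : Fin (n+2) → V) :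
    pathProb G (n+1) x p =
      pathProb G n x (fun i => p i.castSucc) *
        step G (p (Fin.last n).castSucc) (p (Fin.last (n+1))) := by
  unfold pathProb
  rw [Fin.prod_univ_castSucc]
  simp only [Fin.succ_castSucc, Fin.succ_last, Fin.castSucc_zero]
  rw [mul_assoc]; rfl

lemma ext_init_last {n : ℕ} {p q : Fin (n+2) → V}
    (h1 : (fun i : Fin (n+1) => p i.castSucc) = (fun i : Fin (n+1) => q i.castSucc))
    (h2 : p (Fin.last (n+1)) = q (Fin.last (n+1))) : p = q := by
  funext i
  refine Fin.lastCases h2 (fun j => ?_) i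
  exact congrFun h1 j

lemma pathProb_sum_le_one : ∀ (n : ℕ) (x : V) (S : Finset (Fin (n+1) → V)),
    ∑ p ∈ S, pathProb G n x p ≤ 1 := by
  intro n
  induction n with
  | zero =>
    intro x S
    have h : ∀ p : Fin 1 → V, pathProb G 0 x p
        = if p = (fun _ => x) then (1:ℝ) else 0 := by
      intro p
      unfold pathProb
      rw [Fin.prod_univ_zero, mul_one]
      by_cases hp : p 0 = x
      · rw [if_pos hp, if_pos]
        funext i
        rw [Subsingleton.elim i 0, hp]
      · rw [if_neg hp, if_neg]
        intro hc
        exact hp (by rw [hc])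
    calc ∑ p ∈ S, pathProb G 0 x p
        = ∑ p ∈ S, if p = (fun _ => x) then (1:ℝ) else 0 :=
          Finset.sum_congr rfl fun p _ => h p
      _ = if (fun _ => x) ∈ S then (1:ℝ) else 0 := Finset.sum_ite_eq' S _ _
      _ ≤ 1 := by split_ifs <;> norm_num
  | succ n ih =>
    intro x S
    classical
    have hinj : ∀ p ∈ S, ∀ q ∈ S,
        (fun i : Fin (n+1) => p i.castSucc, p (Fin.last (n+1)))
          = (fun i : Fin (n+1) => q i.castSucc, q (Fin.last (n+1))) → p = q := by
      intro p _ q _ h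
      exact ext_init_last (congrArg Prod.fst h) (congrArg Prod.snd h)
    have hs : ∑ p ∈ S, pathProb G (n+1) x p
        = ∑ r ∈ S.image (fun p => (fun i : Fin (n+1) => p i.castSucc, p (Fin.last (n+1)))),
            pathProb G n x r.1 * step G (r.1 (Fin.last n)) r.2 := by
      rw [Finset.sum_image hinj]
      exact Finset.sum_congr rfl fun p _ => pathProb_succ G n x p
    rw [hs]
    set Φ := S.image (fun p => (fun i : Fin (n+1) => p i.castSucc, p (Fin.last (n+1)))) with hΦ
    set Q := Φ.image Prod.fst with hQ
    set W := Φ.image Prod.snd with hW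
    have hsub : Φ ⊆ Q ×ˢ W := by
      intro r hr
      exact Finset.mem_product.2 ⟨Finset.mem_image_of_mem _ hr, Finset.mem_image_of_mem _ hr⟩
    have h1 : ∑ r ∈ Φ, pathProb G n x r.1 * step G (r.1 (Fin.last n)) r.2
        ≤ ∑ r ∈ Q ×ˢ W, pathProb G n x r.1 * step G (r.1 (Fin.last n)) r.2 :=
      Finset.sum_le_sum_of_subset_of_nonneg hsub fun r _ _ =>
        mul_nonneg (pathProb_nonneg G n x r.1) (step_nonneg G _ _)
    refine h1.trans ?_
    rw [Finset.sum_product]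
    have h2 : ∀ q ∈ Q, ∑ v ∈ W, pathProb G n x q * step G (q (Fin.last n)) v
        ≤ pathProb G n x q := by
      intro q _
      rw [← Finset.mul_sum]
      calc pathProb G n x q * ∑ v ∈ W, step G (q (Fin.last n)) v
          ≤ pathProb G n x q * 1 :=
            mul_le_mul_of_nonneg_left (step_row_sum_le G _ W) (pathProb_nonneg G n x q)
        _ = pathProb G n x q := mul_one _
    calc ∑ q ∈ Q, ∑ v ∈ W, pathProb G n x q * step G (q (Fin.last n)) v
        ≤ ∑ q ∈ Q, pathProb G n x q := Finset.sum_le_sum h2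
      _ ≤ 1 := ih x Q

lemma Pmat_nonneg : ∀ (n : ℕ) (x y : V), 0 ≤ Pmat G n x y := by
  intro n
  induction n with
  | zero =>
    intro x y
    simp only [Pmat]
    split_ifs <;> norm_num
  | succ n ih =>
    intro x y
    simp only [Pmat]
    exact tsum_nonneg fun z => mul_nonneg (ih x z) (step_nonneg G z y)

lemma pathProb_sum_le_Pmat : ∀ (n : ℕ) (x y : V) (S : Finset (Fin (n+1) → V)),
    (∀ p ∈ S, p (Fin.last n) = y) → ∑ p ∈ S, pathProb G n x p ≤ Pmat G n x y := by
  intro n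
  induction n with
  | zero =>
    intro x y S hS
    classical
    have hsub : S ⊆ {fun _ => y} := by
      intro p hp
      rw [Finset.mem_singleton]
      funext i
      have hi : i = Fin.last 0 := by
        have hlt := i.isLt
        apply Fin.ext
        omega
      rw [hi]
      exact hS p hp
    calc ∑ p ∈ S, pathProb G 0 x p
        ≤ ∑ p ∈ ({fun _ => y} : Finset (Fin 1 → V)), pathProb G 0 x p :=
          Finset.sum_le_sum_of_subset_of_nonneg hsub (fun p _ _ => pathProb_nonneg G 0 x p)
      _ = pathProb G 0 x (fun _ => y) := Finset.sum_singleton _ _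
      _ ≤ Pmat G 0 x y := by
          unfold pathProb
          simp only [Pmat]
          rw [Fin.prod_univ_zero, mul_one]
          by_cases h : x = y
          · rw [if_pos h, if_pos h.symm]
          · rw [if_neg h, if_neg (fun hc => h hc.symm)]
  | succ n ih =>
    intro x y S hS
    classical
    have hinj : ∀ p ∈ S, ∀ q ∈ S,
        (fun i : Fin (n+1) => p i.castSucc) = (fun i : Fin (n+1) => q i.castSucc) → p = q := by
      intro p hp q hq h
      exact ext_init_last h (by rw [hS p hp, hS q hq])
    have hs : ∑ p ∈ S, pathProb G (n+1) x p
        = ∑ q ∈ S.image (fun p => (fun i : Fin (n+1) => p i.castSucc)),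
            pathProb G n x q * step G (q (Fin.last n)) y := by
      rw [Finset.sum_image hinj]
      refine Finset.sum_congr rfl fun p hp => ?_
      rw [pathProb_succ G n x p, hS p hp]
    rw [hs]
    set Q := S.image (fun p => (fun i : Fin (n+1) => p i.castSucc)) with hQdef
    have key : ∑ q ∈ Q, pathProb G n x q * step G (q (Fin.last n)) y
        ≤ ∑ z ∈ Q.image (fun q => q (Fin.last n)), Pmat G n x z * step G z y := by
      rw [← Finset.sum_fiberwise_of_maps_to
        (g := fun q : Fin (n+1) → V => q (Fin.last n))
        (t := Q.image (fun q => q (Fin.last n)))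
        (fun q hq => Finset.mem_image_of_mem _ hq)
        (fun q => pathProb G n x q * step G (q (Fin.last n)) y)]
      refine Finset.sum_le_sum fun z _ => ?_
      have heq : ∑ q ∈ Q.filter (fun q => q (Fin.last n) = z),
          pathProb G n x q * step G (q (Fin.last n)) y
          = (∑ q ∈ Q.filter (fun q => q (Fin.last n) = z), pathProb G n x q) * step G z y := by
        rw [Finset.sum_mul]
        refine Finset.sum_congr rfl fun q hq => ?_
        rw [(Finset.mem_filter.1 hq).2]
      rw [heq]
      exact mul_le_mul_of_nonneg_right
        (ih x z _ (fun q hq => (Finset.mem_filter.1 hq).2)) (step_nonneg G z y)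
    refine key.trans ?_
    have hsupp : ∀ z, z ∉ insert y (G.neighborFinset y) → Pmat G n x z * step G z y = 0 := by
      intro z hz
      have h1 : z ≠ y := fun h => hz (by rw [h]; exact Finset.mem_insert_self _ _)
      have h2 : ¬ G.Adj z y := fun h =>
        hz (Finset.mem_insert_of_mem ((G.mem_neighborFinset y z).2 h.symm))
      unfold step
      rw [if_neg h1, if_neg h2, mul_zero]
    have hsum : Summable fun z => Pmat G n x z * step G z y :=
      summable_of_ne_finset_zero hsupp
    have hPm : Pmat G (n+1) x y = ∑' z, Pmat G n x z * step G z y := by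
      simp only [Pmat]
    rw [hPm]
    exact Summable.sum_le_tsum _ (fun z _ => mul_nonneg (Pmat_nonneg G n x z) (step_nonneg G z y)) hsum

lemma summable_pathProb (n : ℕ) (x : V) : Summable (pathProb G n x) :=
  summable_of_sum_le (fun p => pathProb_nonneg G n x p) (pathProb_sum_le_one G n x)

lemma firstHit_nonneg (m : ℕ) (x y : V) : 0 ≤ firstHit G m x y := by
  unfold firstHit walkProb
  refine tsum_nonneg fun p => mul_nonneg (pathProb_nonneg G m x p) ?_
  exact Set.indicator_nonneg (fun _ _ => by norm_num) p

lemma firstHit_finset_sum_le_one (m : ℕ) (x : V) (T : Finset V) :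
    ∑ y ∈ T, firstHit G m x y ≤ 1 := by
  classical
  set E : V → Set (Fin (m+1) → V) :=
    fun y => {p | p (Fin.last m) = y ∧ ∀ i : Fin (m+1), i ≠ Fin.last m → p i ≠ y} with hE
  have hind01 : ∀ (y : V) (p : Fin (m+1) → V),
      0 ≤ (E y).indicator (fun _ => (1:ℝ)) p ∧ (E y).indicator (fun _ => (1:ℝ)) p ≤ 1 := by
    intro y p
    rw [Set.indicator_apply]
    constructor <;> (split_ifs <;> norm_num)
  have hsummand : ∀ y : V, Summable (fun p : Fin (m+1) → V =>
      pathProb G m x p * (E y).indicator (fun _ => (1:ℝ)) p) := by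
    intro y
    refine Summable.of_nonneg_of_le (fun p => ?_) (fun p => ?_) (summable_pathProb G m x)
    · exact mul_nonneg (pathProb_nonneg G m x p) (hind01 y p).1
    · calc pathProb G m x p * (E y).indicator (fun _ => (1:ℝ)) p
          ≤ pathProb G m x p * 1 :=
            mul_le_mul_of_nonneg_left (hind01 y p).2 (pathProb_nonneg G m x p)
        _ = pathProb G m x p := mul_one _
  have hswap : ∑ y ∈ T, firstHit G m x y
      = ∑' p : Fin (m+1) → V, ∑ y ∈ T,
          pathProb G m x p * (E y).indicator (fun _ => (1:ℝ)) p := by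
    unfold firstHit walkProb
    exact (Summable.tsum_finsetSum (fun y _ => hsummand y)).symm
  rw [hswap]
  have hterm : ∀ p : Fin (m+1) → V,
      ∑ y ∈ T, pathProb G m x p * (E y).indicator (fun _ => (1:ℝ)) p ≤ pathProb G m x p := by
    intro p
    have hb' : ∀ y ∈ T, pathProb G m x p * (E y).indicator (fun _ => (1:ℝ)) p
        ≤ if y = p (Fin.last m) then pathProb G m x p else 0 := by
      intro y hy
      rw [Set.indicator_apply]
      split_ifs with h1 h2 h2
      · rw [mul_one]
      · exact absurd h1.1.symm h2
      · rw [mul_zero]; exact pathProb_nonneg G m x p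
      · rw [mul_zero]
    calc ∑ y ∈ T, pathProb G m x p * (E y).indicator (fun _ => (1:ℝ)) p
        ≤ ∑ y ∈ T, if y = p (Fin.last m) then pathProb G m x p else 0 :=
          Finset.sum_le_sum hb'
      _ = if p (Fin.last m) ∈ T then pathProb G m x p else 0 := Finset.sum_ite_eq' T _ _
      _ ≤ pathProb G m x p := by
          split_ifs
          · exact le_refl _
          · exact pathProb_nonneg G m x p
  refine le_trans (Summable.tsum_le_tsum hterm (summable_sum fun y _ => hsummand y)
    (summable_pathProb G m x)) ?_
  exact Summable.tsum_le_of_sum_le (summable_pathProb G m x) (pathProb_sum_le_one G m x)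

lemma firstHit_le_one (m : ℕ) (x y : V) : firstHit G m x y ≤ 1 := by
  have h := firstHit_finset_sum_le_one G m x {y}
  rwa [Finset.sum_singleton] at h

lemma greenT_nonneg (t : ℝ) (ht : 1 < t) (x y : V) : 0 ≤ greenT G t x y := by
  unfold greenT
  refine tsum_nonneg fun m => mul_nonneg (pow_nonneg ?_ m) (firstHit_nonneg G m x y)
  exact div_nonneg (by linarith) (by linarith)

lemma greenT_finset_sum_le (t : ℝ) (ht : 1 < t) (x : V) (T : Finset V) :
    ∑ y ∈ T, greenT G t x y ≤ t + 1 := by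
  classical
  have hr0 : 0 ≤ t/(t+1) := div_nonneg (by linarith) (by linarith)
  have hr1 : t/(t+1) < 1 := by
    rw [div_lt_one (by linarith)]; linarith
  have hgeo : Summable (fun m : ℕ => (t/(t+1))^m) := summable_geometric_of_lt_one hr0 hr1
  have hsummand : ∀ y : V, Summable (fun m : ℕ => (t/(t+1))^m * firstHit G m x y) := by
    intro y
    refine Summable.of_nonneg_of_le
      (fun m => mul_nonneg (pow_nonneg hr0 m) (firstHit_nonneg G m x y)) (fun m => ?_) hgeo
    calc (t/(t+1))^m * firstHit G m x y
        ≤ (t/(t+1))^m * 1 :=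
          mul_le_mul_of_nonneg_left (firstHit_le_one G m x y) (pow_nonneg hr0 m)
      _ = (t/(t+1))^m := mul_one _
  have hswap : ∑ y ∈ T, greenT G t x y
      = ∑' m : ℕ, ∑ y ∈ T, (t/(t+1))^m * firstHit G m x y := by
    unfold greenT
    exact (Summable.tsum_finsetSum fun y _ => hsummand y).symm
  rw [hswap]
  have hle : ∑' m : ℕ, ∑ y ∈ T, (t/(t+1))^m * firstHit G m x y
      ≤ ∑' m : ℕ, (t/(t+1))^m := by
    refine Summable.tsum_le_tsum (fun m => ?_) (summable_sum fun y _ => hsummand y) hgeo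
    rw [← Finset.mul_sum]
    calc (t/(t+1))^m * ∑ y ∈ T, firstHit G m x y
        ≤ (t/(t+1))^m * 1 :=
          mul_le_mul_of_nonneg_left (firstHit_finset_sum_le_one G m x T) (pow_nonneg hr0 m)
      _ ≤ (t/(t+1))^m := by rw [mul_one]
  refine hle.trans ?_
  rw [tsum_geometric_of_lt_one hr0 hr1]
  have h1 : 1 - t/(t+1) = 1/(t+1) := by field_simp; ring
  rw [h1, one_div, inv_inv]

end Aux

/-- the expected ratio of the massive Green function to the transition
probability is at most `t + 1`. -/
theorem statement11 (V : Type) (G : SimpleGraph V) [G.LocallyFinite]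
    (hconn : G.Connected) (x : V) (n : ℕ) (t : ℝ) (ht : 1 < t) :
    walkExp G n x
        (fun p => greenT G t (p 0) (p (Fin.last n)) / Pmat G n (p 0) (p (Fin.last n)))
      ≤ t + 1 := by
  classical
  unfold walkExp
  refine tsum_le_of_sum_le' (by linarith) (fun S => ?_)
  set f : (Fin (n+1) → V) → ℝ :=
    fun p => greenT G t (p 0) (p (Fin.last n)) / Pmat G n (p 0) (p (Fin.last n)) with hfdef
  set S' := S.filter (fun p => pathProb G n x p ≠ 0) with hS'
  have h1 : ∑ p ∈ S, pathProb G n x p * f p = ∑ p ∈ S', pathProb G n x p * f p :=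
    (Finset.sum_filter_of_ne fun p _ h => left_ne_zero_of_mul h).symm
  have hx0 : ∀ p ∈ S', p 0 = x := by
    intro p hp
    have h := (Finset.mem_filter.1 hp).2
    by_contra hc
    apply h
    unfold pathProb
    rw [if_neg hc, zero_mul]
  have hpos : ∀ p ∈ S', 0 < pathProb G n x p := fun p hp =>
    lt_of_le_of_ne (pathProb_nonneg G n x p) (Ne.symm (Finset.mem_filter.1 hp).2)
  set T := S'.image (fun p => p (Fin.last n)) with hT
  have h2 : ∑ p ∈ S', pathProb G n x p * f p
      = ∑ y ∈ T, ∑ p ∈ S'.filter (fun p => p (Fin.last n) = y), pathProb G n x p * f p :=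
    (Finset.sum_fiberwise_of_maps_to (fun p hp => Finset.mem_image_of_mem _ hp) _).symm
  have h3 : ∀ y ∈ T, ∑ p ∈ S'.filter (fun p => p (Fin.last n) = y),
      pathProb G n x p * f p ≤ greenT G t x y := by
    intro y hy
    obtain ⟨p0, hp0, hp0y⟩ := Finset.mem_image.1 hy
    have hfib0 : p0 ∈ S'.filter (fun p => p (Fin.last n) = y) :=
      Finset.mem_filter.2 ⟨hp0, hp0y⟩
    have hmass : ∑ p ∈ S'.filter (fun p => p (Fin.last n) = y), pathProb G n x p
        ≤ Pmat G n x y :=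
      pathProb_sum_le_Pmat G n x y _ (fun p hp => (Finset.mem_filter.1 hp).2)
    have hPpos : 0 < Pmat G n x y :=
      lt_of_lt_of_le (lt_of_lt_of_le (hpos p0 hp0)
        (Finset.single_le_sum (fun p _ => pathProb_nonneg G n x p) hfib0)) hmass
    have hfp : ∀ p ∈ S'.filter (fun p => p (Fin.last n) = y),
        f p = greenT G t x y / Pmat G n x y := by
      intro p hp
      have hmem := (Finset.mem_filter.1 hp).1
      have hlast := (Finset.mem_filter.1 hp).2
      rw [hfdef]
      simp only []
      rw [hx0 p hmem, hlast]
    calc ∑ p ∈ S'.filter (fun p => p (Fin.last n) = y), pathProb G n x p * f p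
        = (∑ p ∈ S'.filter (fun p => p (Fin.last n) = y), pathProb G n x p)
            * (greenT G t x y / Pmat G n x y) := by
          rw [Finset.sum_mul]
          exact Finset.sum_congr rfl fun p hp => by rw [hfp p hp]
      _ ≤ Pmat G n x y * (greenT G t x y / Pmat G n x y) :=
          mul_le_mul_of_nonneg_right hmass
            (div_nonneg (greenT_nonneg G t ht x y) hPpos.le)
      _ = greenT G t x y := by field_simp
  calc ∑ p ∈ S, pathProb G n x p * f p
      = ∑ p ∈ S', pathProb G n x p * f p := h1
    _ = ∑ y ∈ T, ∑ p ∈ S'.filter (fun p => p (Fin.last n) = y),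
          pathProb G n x p * f p := h2
    _ ≤ ∑ y ∈ T, greenT G t x y := Finset.sum_le_sum h3
    _ ≤ t + 1 := greenT_finset_sum_le G t ht x T

end LazyRW
end

section
/- Let G = (V,E) be a locally finite graph, let F be a nonempty finite subset of V, and let (Ω, μ) be a probability space carrying, for each x ∈ V, a measurable random variable X_x : Ω → V (with V given the discrete σ-algebra). Let t ≥ 0 be such that μ(X_x ≠ X_y) ≤ t for every pair of adjacent vertices x ∼ y. For each x ∈ V define the random set [x] := { y ∈ F : X_y = X_x }. Then (1/deg(F)) · ∑_{x∈F} deg(x) · E[ |∂([x] ∩ F)| / deg([x] ∩ F) ] ≤ t + |∂F|/deg(F), where the expectation is over μ (note x ∈ [x] ∩ F for x ∈ F, so deg([x] ∩ F) ≥ 1, assuming every vertex of F has degree at least 1). -/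
open scoped Classical BigOperators

namespace LazyRW

variable {V : Type*}

open MeasureTheory

open MeasureTheory in
private lemma integral_le_toReal_lintegral {Ω : Type} [MeasurableSpace Ω] (μ : Measure Ω)
    (f : Ω → ℝ) (hf : ∀ ω, 0 ≤ f ω) :
    ∫ ω, f ω ∂μ ≤ (∫⁻ ω, ENNReal.ofReal (f ω) ∂μ).toReal := by
  by_cases h : Integrable f μ
  · rw [integral_eq_lintegral_of_nonneg_ae (Filter.Eventually.of_forall hf) h.1]
  · rw [integral_undef h]; exact ENNReal.toReal_nonneg

open MeasureTheory in
private lemma sum_lintegral_le {Ω : Type} {ι : Type*} [MeasurableSpace Ω] (μ : Measure Ω)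
    (s : Finset ι) (f : ι → Ω → ENNReal) :
    ∑ i ∈ s, ∫⁻ ω, f i ω ∂μ ≤ ∫⁻ ω, ∑ i ∈ s, f i ω ∂μ := by
  classical
  induction s using Finset.induction with
  | empty => simp
  | @insert a s hx ih =>
    simp only [Finset.sum_insert hx]
    calc (∫⁻ ω, f a ω ∂μ) + ∑ i ∈ s, ∫⁻ ω, f i ω ∂μ
        ≤ (∫⁻ ω, f a ω ∂μ) + ∫⁻ ω, ∑ i ∈ s, f i ω ∂μ := by gcongr
      _ ≤ ∫⁻ ω, f a ω + ∑ i ∈ s, f i ω ∂μ := le_lintegral_add _ _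

/-- Deterministic mass-transport identity for the cells of a colouring `ξ`. -/
private lemma cell_masstransport {V : Type} (G : SimpleGraph V) [G.LocallyFinite]
    (F : Finset V) (hFdeg : ∀ v ∈ F, 1 ≤ G.degree v) (ξ : V → V) :
    ∑ x ∈ F, (G.degree x : ℝ) *
        ((boundaryCard G (F.filter (fun y => ξ y = ξ x)) : ℝ) /
          (degSum G (F.filter (fun y => ξ y = ξ x)) : ℝ))
      = (boundaryCard G F : ℝ) +
          ∑ w ∈ F, (((G.neighborFinset w).filter (fun z => z ∈ F ∧ ξ z ≠ ξ w)).card : ℝ) := by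
  set C : V → Finset V := fun x => F.filter (fun y => ξ y = ξ x) with hCdef
  have hmemC : ∀ x w, w ∈ C x ↔ (w ∈ F ∧ ξ w = ξ x) := by
    intro x w; simp [hCdef]
  have hself : ∀ x ∈ F, x ∈ C x := fun x hx => (hmemC x x).2 ⟨hx, rfl⟩
  have hCC : ∀ x w, w ∈ C x → C w = C x := by
    intro x w hw
    obtain ⟨hwF, hwx⟩ := (hmemC x w).1 hw
    ext y
    rw [hmemC, hmemC, hwx]
  have hdpos : ∀ x ∈ F, 0 < degSum G (C x) := by
    intro x hx
    have h1 : 1 ≤ G.degree x := hFdeg x hx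
    have h2 : G.degree x ≤ ∑ w ∈ C x, G.degree w := by
      exact Finset.single_le_sum (f := fun w => G.degree w)
        (fun i _ => Nat.zero_le _) (hself x hx)
    unfold degSum; omega
  have hd0 : ∀ x ∈ F, (degSum G (C x) : ℝ) ≠ 0 := by
    intro x hx
    exact_mod_cast (hdpos x hx).ne'
  set b : V → ℝ := fun w => (((G.neighborFinset w).filter (fun z => z ∉ C w)).card : ℝ)
    with hbdef
  have hbc : ∀ x ∈ F, (boundaryCard G (C x) : ℝ) = ∑ w ∈ C x, b w := by
    intro x hx
    unfold boundaryCard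
    push_cast
    refine Finset.sum_congr rfl (fun w hw => ?_)
    simp only [hbdef, hCC x w hw]
  have step1 : ∀ x ∈ F, (G.degree x : ℝ) *
      ((boundaryCard G (C x) : ℝ) / (degSum G (C x) : ℝ))
      = ∑ w ∈ F, (if ξ w = ξ x then
          (b w / (degSum G (C w) : ℝ)) * (G.degree x : ℝ) else 0) := by
    intro x hx
    rw [hbc x hx, Finset.sum_div, Finset.mul_sum]
    have : (C x : Finset V) = F.filter (fun w => ξ w = ξ x) := rfl
    rw [this, Finset.sum_filter]
    refine Finset.sum_congr rfl (fun w hw => ?_)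
    by_cases h : ξ w = ξ x
    · have hCwx : C w = C x := hCC x w ((hmemC x w).2 ⟨hw, h⟩)
      simp only [if_pos h, hCwx]
      ring
    · simp [h]
  have step3 : ∀ w ∈ F, (∑ x ∈ F, (if ξ w = ξ x then
      (b w / (degSum G (C w) : ℝ)) * (G.degree x : ℝ) else 0)) = b w := by
    intro w hw
    have h1 : ∀ x, (if ξ w = ξ x then (b w / (degSum G (C w) : ℝ)) * (G.degree x : ℝ) else 0)
        = (b w / (degSum G (C w) : ℝ)) * (if ξ w = ξ x then (G.degree x : ℝ) else 0) := by
      intro x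
      rw [mul_ite, mul_zero]
    simp only [h1, ← Finset.mul_sum]
    have h2 : (∑ x ∈ F, (if ξ w = ξ x then (G.degree x : ℝ) else 0))
        = (degSum G (C w) : ℝ) := by
      rw [← Finset.sum_filter]
      have : F.filter (fun x => ξ w = ξ x) = C w := by
        ext y
        rw [hmemC]
        simp [eq_comm]
      rw [this]
      unfold degSum
      push_cast
      rfl
    rw [h2, div_mul_cancel₀ _ (hd0 w hw)]
  have step4 : ∀ w ∈ F, b w
      = (((G.neighborFinset w).filter (fun z => z ∉ F)).card : ℝ)
        + (((G.neighborFinset w).filter (fun z => z ∈ F ∧ ξ z ≠ ξ w)).card : ℝ) := by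
    intro w hw
    have : ((G.neighborFinset w).filter (fun z => z ∉ C w)).card
        = ((G.neighborFinset w).filter (fun z => z ∉ F)).card
          + ((G.neighborFinset w).filter (fun z => z ∈ F ∧ ξ z ≠ ξ w)).card := by
      rw [Finset.card_filter, Finset.card_filter, Finset.card_filter,
        ← Finset.sum_add_distrib]
      refine Finset.sum_congr rfl (fun z hz => ?_)
      by_cases h1 : z ∈ F <;> by_cases h2 : ξ z = ξ w <;> simp [hmemC, h1, h2]
    rw [hbdef]
    push_cast [this]
    ring
  calc ∑ x ∈ F, (G.degree x : ℝ) *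
        ((boundaryCard G (C x) : ℝ) / (degSum G (C x) : ℝ))
      = ∑ x ∈ F, ∑ w ∈ F, (if ξ w = ξ x then
          (b w / (degSum G (C w) : ℝ)) * (G.degree x : ℝ) else 0) :=
        Finset.sum_congr rfl step1
    _ = ∑ w ∈ F, ∑ x ∈ F, (if ξ w = ξ x then
          (b w / (degSum G (C w) : ℝ)) * (G.degree x : ℝ) else 0) := Finset.sum_comm
    _ = ∑ w ∈ F, b w := Finset.sum_congr rfl step3
    _ = (boundaryCard G F : ℝ) +
          ∑ w ∈ F, (((G.neighborFinset w).filter (fun z => z ∈ F ∧ ξ z ≠ ξ w)).card : ℝ) := by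
        rw [Finset.sum_congr rfl step4, Finset.sum_add_distrib]
        unfold boundaryCard
        push_cast
        ring


/-- mass-transport bound on the expected boundary-to-volume ratio of the
cells of the random equivalence relation induced by a coupled family of random variables. -/
theorem statement15 (V : Type) (G : SimpleGraph V) [G.LocallyFinite]
    (F : Finset V) (hF : F.Nonempty) (hFdeg : ∀ v ∈ F, 1 ≤ G.degree v)
    (Ω : Type) [MeasurableSpace Ω] (μ : Measure Ω) [IsProbabilityMeasure μ]
    (X : V → Ω → V) (hX : ∀ x : V, @Measurable Ω V _ ⊤ (X x))
    (t : ℝ) (ht : 0 ≤ t)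
    (hcoup : ∀ x y : V, G.Adj x y → (μ {ω | X x ω ≠ X y ω}).toReal ≤ t) :
    (1 / (degSum G F : ℝ)) *
        ∑ x ∈ F, (G.degree x : ℝ) *
          ∫ ω, ((boundaryCard G ((F.filter (fun y => X y ω = X x ω)) ∩ F) : ℝ) /
                 (degSum G ((F.filter (fun y => X y ω = X x ω)) ∩ F) : ℝ)) ∂μ
      ≤ t + (boundaryCard G F : ℝ) / (degSum G F : ℝ) := by
  have hinter : ∀ (ω : Ω) (x : V),
      (F.filter (fun y => X y ω = X x ω)) ∩ F = F.filter (fun y => X y ω = X x ω) :=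
    fun ω x => Finset.inter_eq_left.mpr (Finset.filter_subset _ _)
  simp only [hinter]
  have hDgpos : 0 < degSum G F := by
    obtain ⟨v, hv⟩ := hF
    have h1 : 1 ≤ G.degree v := hFdeg v hv
    have h2 : G.degree v ≤ ∑ w ∈ F, G.degree w := by
      exact Finset.single_le_sum (f := fun w => G.degree w) (fun i _ => Nat.zero_le _) hv
    unfold degSum; omega
  have hDg0 : ((degSum G F : ℝ)) ≠ 0 := by exact_mod_cast hDgpos.ne'
  have hself : ∀ (ω : Ω) (x : V), x ∈ F → x ∈ F.filter (fun y => X y ω = X x ω) := by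
    intro ω x hx; simp [hx]
  have hdpos : ∀ (ω : Ω) (x : V), x ∈ F →
      0 < degSum G (F.filter (fun y => X y ω = X x ω)) := by
    intro ω x hx
    have h1 : 1 ≤ G.degree x := hFdeg x hx
    have h2 : G.degree x ≤ ∑ w ∈ F.filter (fun y => X y ω = X x ω), G.degree w := by
      exact Finset.single_le_sum (f := fun w => G.degree w)
        (fun i _ => Nat.zero_le _) (hself ω x hx)
    unfold degSum; omega
  have hr_nonneg : ∀ (ω : Ω) (x : V),
      0 ≤ (boundaryCard G (F.filter (fun y => X y ω = X x ω)) : ℝ) /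
          (degSum G (F.filter (fun y => X y ω = X x ω)) : ℝ) :=
    fun ω x => div_nonneg (Nat.cast_nonneg _) (Nat.cast_nonneg _)
  have hBle : ∀ W : Finset V, boundaryCard G W ≤ degSum G W := by
    intro W
    refine Finset.sum_le_sum (fun w _ => ?_)
    exact Finset.card_filter_le _ _
  have hr_le : ∀ (ω : Ω) (x : V), x ∈ F →
      (boundaryCard G (F.filter (fun y => X y ω = X x ω)) : ℝ) /
          (degSum G (F.filter (fun y => X y ω = X x ω)) : ℝ) ≤ (degSum G F : ℝ) := by
    intro ω x hx
    have h1 : (1 : ℝ) ≤ (degSum G (F.filter (fun y => X y ω = X x ω)) : ℝ) := by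
      exact_mod_cast hdpos ω x hx
    refine (div_le_self (Nat.cast_nonneg _) h1).trans ?_
    have h2 : boundaryCard G (F.filter (fun y => X y ω = X x ω)) ≤ degSum G F := by
      refine (hBle _).trans ?_
      unfold degSum
      exact Finset.sum_le_sum_of_subset (Finset.filter_subset _ _)
    exact_mod_cast h2
  set J : V → ENNReal := fun x => ∫⁻ ω, ENNReal.ofReal
      ((boundaryCard G (F.filter (fun y => X y ω = X x ω)) : ℝ) /
       (degSum G (F.filter (fun y => X y ω = X x ω)) : ℝ)) ∂μ with hJ
  have hJle : ∀ x ∈ F, J x ≤ (degSum G F : ENNReal) := by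
    intro x hx
    simp only [hJ]
    calc (∫⁻ ω, ENNReal.ofReal
        ((boundaryCard G (F.filter (fun y => X y ω = X x ω)) : ℝ) /
         (degSum G (F.filter (fun y => X y ω = X x ω)) : ℝ)) ∂μ)
        ≤ ∫⁻ _, (degSum G F : ENNReal) ∂μ := by
          refine lintegral_mono (fun ω => ?_)
          rw [← ENNReal.ofReal_natCast (degSum G F)]
          exact ENNReal.ofReal_le_ofReal (hr_le ω x hx)
      _ = (degSum G F : ENNReal) := by simp
  have hJne : ∀ x ∈ F, J x ≠ ⊤ :=
    fun x hx => ne_top_of_le_ne_top (ENNReal.natCast_ne_top _) (hJle x hx)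
  have hsumA : ∑ x ∈ F, (G.degree x : ℝ) *
        ∫ ω, ((boundaryCard G (F.filter (fun y => X y ω = X x ω)) : ℝ) /
              (degSum G (F.filter (fun y => X y ω = X x ω)) : ℝ)) ∂μ
      ≤ (∑ x ∈ F, (G.degree x : ENNReal) * J x).toReal := by
    calc ∑ x ∈ F, (G.degree x : ℝ) *
        ∫ ω, ((boundaryCard G (F.filter (fun y => X y ω = X x ω)) : ℝ) /
              (degSum G (F.filter (fun y => X y ω = X x ω)) : ℝ)) ∂μ
        ≤ ∑ x ∈ F, (G.degree x : ℝ) * (J x).toReal := by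
          refine Finset.sum_le_sum (fun x hx => ?_)
          refine mul_le_mul_of_nonneg_left ?_ (Nat.cast_nonneg _)
          simp only [hJ]
          exact integral_le_toReal_lintegral μ _ (fun ω => hr_nonneg ω x)
      _ = (∑ x ∈ F, (G.degree x : ENNReal) * J x).toReal := by
          rw [ENNReal.toReal_sum
            (fun x hx => ENNReal.mul_ne_top (ENNReal.natCast_ne_top _) (hJne x hx))]
          refine Finset.sum_congr rfl (fun x hx => ?_)
          rw [ENNReal.toReal_mul, ENNReal.toReal_natCast]
  have hB : ∑ x ∈ F, (G.degree x : ENNReal) * J x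
      ≤ (boundaryCard G F : ENNReal) + (degSum G F : ENNReal) * ENNReal.ofReal t := by
    calc ∑ x ∈ F, (G.degree x : ENNReal) * J x
        = ∑ x ∈ F, ∫⁻ ω, (G.degree x : ENNReal) * ENNReal.ofReal
            ((boundaryCard G (F.filter (fun y => X y ω = X x ω)) : ℝ) /
             (degSum G (F.filter (fun y => X y ω = X x ω)) : ℝ)) ∂μ := by
          refine Finset.sum_congr rfl (fun x _ => ?_)
          simp only [hJ]
          exact (lintegral_const_mul' _ _ (ENNReal.natCast_ne_top _)).symm
      _ ≤ ∫⁻ ω, ∑ x ∈ F, (G.degree x : ENNReal) * ENNReal.ofReal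
            ((boundaryCard G (F.filter (fun y => X y ω = X x ω)) : ℝ) /
             (degSum G (F.filter (fun y => X y ω = X x ω)) : ℝ)) ∂μ :=
          sum_lintegral_le μ F _
      _ = ∫⁻ ω, ((boundaryCard G F : ENNReal)
            + ∑ w ∈ F, (((G.neighborFinset w).filter
                (fun z => z ∈ F ∧ X z ω ≠ X w ω)).card : ENNReal)) ∂μ := by
          refine lintegral_congr (fun ω => ?_)
          have hkey := cell_masstransport G F hFdeg (fun y => X y ω)
          have h1 : ∀ x ∈ F, (G.degree x : ENNReal) * ENNReal.ofReal ((boundaryCard G (F.filter (fun y => X y ω = X x ω)) : ℝ) / (degSum G (F.filter (fun y => X y ω = X x ω)) : ℝ)) = ENNReal.ofReal ((G.degree x : ℝ) * ((boundaryCard G (F.filter (fun y => X y ω = X x ω)) : ℝ) / (degSum G (F.filter (fun y => X y ω = X x ω)) : ℝ))) := by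
            intro x _
            rw [ENNReal.ofReal_mul (Nat.cast_nonneg _), ENNReal.ofReal_natCast]
          rw [Finset.sum_congr rfl h1, ← ENNReal.ofReal_sum_of_nonneg (fun x _ => mul_nonneg (Nat.cast_nonneg _) (hr_nonneg ω x)), hkey]
          rw [show ((boundaryCard G F : ℝ) + ∑ w ∈ F, ((((G.neighborFinset w).filter (fun z => z ∈ F ∧ X z ω ≠ X w ω)).card : ℝ))) = (((boundaryCard G F + ∑ w ∈ F, ((G.neighborFinset w).filter (fun z => z ∈ F ∧ X z ω ≠ X w ω)).card : ℕ) : ℝ)) by push_cast; ring]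
          rw [ENNReal.ofReal_natCast]
          push_cast
          ring
      _ ≤ ∫⁻ ω, ((boundaryCard G F : ENNReal)
            + ∑ w ∈ F, ∑ z ∈ (G.neighborFinset w).filter (fun z => z ∈ F),
                Set.indicator (toMeasurable μ {ω' | X z ω' ≠ X w ω'}) 1 ω) ∂μ := by
          refine lintegral_mono (fun ω => add_le_add_right ?_ _)
          refine Finset.sum_le_sum (fun w hw => ?_)
          rw [show (G.neighborFinset w).filter (fun z => z ∈ F ∧ X z ω ≠ X w ω)
              = ((G.neighborFinset w).filter (fun z => z ∈ F)).filter
                  (fun z => X z ω ≠ X w ω) by rw [Finset.filter_filter]]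
          rw [Finset.card_eq_sum_ones, Nat.cast_sum]
          calc ∑ z ∈ ((G.neighborFinset w).filter (fun z => z ∈ F)).filter
                (fun z => X z ω ≠ X w ω), ((1 : ℕ) : ENNReal)
              = ∑ z ∈ ((G.neighborFinset w).filter (fun z => z ∈ F)).filter
                (fun z => X z ω ≠ X w ω),
                  Set.indicator (toMeasurable μ {ω' | X z ω' ≠ X w ω'}) 1 ω := by
                refine Finset.sum_congr rfl (fun z hz => ?_)
                have hne : X z ω ≠ X w ω := (Finset.mem_filter.1 hz).2
                rw [Set.indicator_of_mem (subset_toMeasurable μ _ hne)]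
                simp
            _ ≤ ∑ z ∈ (G.neighborFinset w).filter (fun z => z ∈ F),
                  Set.indicator (toMeasurable μ {ω' | X z ω' ≠ X w ω'}) 1 ω :=
                Finset.sum_le_sum_of_subset (Finset.filter_subset _ _)
      _ = (boundaryCard G F : ENNReal)
            + ∑ w ∈ F, ∑ z ∈ (G.neighborFinset w).filter (fun z => z ∈ F),
                μ (toMeasurable μ {ω' | X z ω' ≠ X w ω'}) := by
          rw [lintegral_add_left measurable_const]
          simp only [lintegral_const, measure_univ, mul_one]
          congr 1
          rw [lintegral_finset_sum _ (fun w _ => Finset.measurable_sum _ (fun z _ =>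
            measurable_one.indicator (measurableSet_toMeasurable μ _)))]
          refine Finset.sum_congr rfl (fun w _ => ?_)
          rw [lintegral_finset_sum _ (fun z _ =>
            measurable_one.indicator (measurableSet_toMeasurable μ _))]
          refine Finset.sum_congr rfl (fun z _ => ?_)
          exact lintegral_indicator_one (measurableSet_toMeasurable μ _)
      _ ≤ (boundaryCard G F : ENNReal)
            + ∑ w ∈ F, ∑ _z ∈ (G.neighborFinset w).filter (fun z => z ∈ F),
                ENNReal.ofReal t := by
          refine add_le_add_right (Finset.sum_le_sum (fun w hw =>
            Finset.sum_le_sum (fun z hz => ?_))) _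
          rw [measure_toMeasurable]
          have hadj : G.Adj z w :=
            ((G.mem_neighborFinset w z).1 (Finset.mem_filter.1 hz).1).symm
          have h1 := hcoup z w hadj
          calc μ {ω' | X z ω' ≠ X w ω'}
              = ENNReal.ofReal (μ {ω' | X z ω' ≠ X w ω'}).toReal :=
                (ENNReal.ofReal_toReal (measure_ne_top μ _)).symm
            _ ≤ ENNReal.ofReal t := ENNReal.ofReal_le_ofReal h1
      _ ≤ (boundaryCard G F : ENNReal) + (degSum G F : ENNReal) * ENNReal.ofReal t := by
          refine add_le_add_right ?_ _
          calc ∑ w ∈ F, ∑ _z ∈ (G.neighborFinset w).filter (fun z => z ∈ F),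
                ENNReal.ofReal t
              = ∑ w ∈ F, (((G.neighborFinset w).filter (fun z => z ∈ F)).card : ENNReal)
                  * ENNReal.ofReal t := by
                refine Finset.sum_congr rfl (fun w _ => ?_)
                rw [Finset.sum_const, nsmul_eq_mul]
            _ ≤ ∑ w ∈ F, (G.degree w : ENNReal) * ENNReal.ofReal t := by
                refine Finset.sum_le_sum (fun w _ => ?_)
                refine mul_le_mul_left ?_ _
                have : ((G.neighborFinset w).filter (fun z => z ∈ F)).card ≤ G.degree w :=
                  Finset.card_filter_le _ _
                exact_mod_cast this
            _ = (degSum G F : ENNReal) * ENNReal.ofReal t := by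
                rw [← Finset.sum_mul]
                congr 1
                unfold degSum
                push_cast
                rfl
  have hfin : ((boundaryCard G F : ENNReal)
      + (degSum G F : ENNReal) * ENNReal.ofReal t) ≠ ⊤ :=
    ENNReal.add_ne_top.2 ⟨ENNReal.natCast_ne_top _,
      ENNReal.mul_ne_top (ENNReal.natCast_ne_top _) ENNReal.ofReal_ne_top⟩
  have hBR : (∑ x ∈ F, (G.degree x : ENNReal) * J x).toReal
      ≤ (boundaryCard G F : ℝ) + (degSum G F : ℝ) * t := by
    have h := ENNReal.toReal_mono hfin hB
    rwa [ENNReal.toReal_add (ENNReal.natCast_ne_top _)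
        (ENNReal.mul_ne_top (ENNReal.natCast_ne_top _) ENNReal.ofReal_ne_top),
      ENNReal.toReal_mul, ENNReal.toReal_natCast, ENNReal.toReal_natCast,
      ENNReal.toReal_ofReal ht] at h
  have hchain := hsumA.trans hBR
  calc (1 / (degSum G F : ℝ)) * ∑ x ∈ F, (G.degree x : ℝ) *
        ∫ ω, ((boundaryCard G (F.filter (fun y => X y ω = X x ω)) : ℝ) /
              (degSum G (F.filter (fun y => X y ω = X x ω)) : ℝ)) ∂μ
      ≤ (1 / (degSum G F : ℝ)) * ((boundaryCard G F : ℝ) + (degSum G F : ℝ) * t) :=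
        mul_le_mul_of_nonneg_left hchain (by positivity)
    _ = t + (boundaryCard G F : ℝ) / (degSum G F : ℝ) := by
        field_simp
        ring


end LazyRW
end
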